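/- Let G be a finite simple graph with vertex set {1,…,n} and let L be an integer with 3 ≤ L ≤ n. Then G has a cycle of length L if and only if there exist points x, y ∈ ℂ^n satisfying: Σ_{i=1}^n y_i = L; for every vertex i, y_i·(y_i − 1) = 0 and ∏_{s=1}^n (x_i − s) = 0; and for every vertex i, y_i · ∏_{j ∈ Adj(i)} (x_i − y_j·x_j + y_j)·(x_i − y_j·x_j − y_j·(L−1)) = 0, where Adj(i) denotes the set of vertices adjacent to i in G. -/

import Mathlib

open SimpleGraph Finset

namespace CycleAux

variable {V : Type*} {G : SimpleGraph V}

lemma map_range_succ {β : Type*} (f : ℕ → β) (k : ℕ) :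
    (List.range (k + 1)).map f = f 0 :: (List.range k).map (fun t => f (t + 1)) := by
  rw [List.range_succ_eq_map, List.map_cons, List.map_map]
  rfl

/-- Build a walk from a vertex function with consecutive adjacency. -/
def walkOfFn (G : SimpleGraph V) : ∀ (v : ℕ → V) (m : ℕ),
    (∀ t, t < m → G.Adj (v t) (v (t + 1))) → G.Walk (v 0) (v m)
  | _, 0, _ => SimpleGraph.Walk.nil
  | v, (m + 1), h => SimpleGraph.Walk.cons (h 0 m.succ_pos)
      (walkOfFn G (fun t => v (t + 1)) m (fun t ht => h (t + 1) (by omega)))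

lemma walkOfFn_length (v : ℕ → V) (m : ℕ) (h) :
    (walkOfFn G v m h).length = m := by
  induction m generalizing v with
  | zero => rfl
  | succ m ih => simp [walkOfFn, ih]

lemma walkOfFn_support (v : ℕ → V) (m : ℕ) (h) :
    (walkOfFn G v m h).support = (List.range (m + 1)).map v := by
  induction m generalizing v with
  | zero => rfl
  | succ m ih =>
      rw [map_range_succ]
      show _ :: (walkOfFn G (fun t => v (t + 1)) m _).support = _
      rw [ih]

lemma walkOfFn_edges (v : ℕ → V) (m : ℕ) (h) :
    (walkOfFn G v m h).edges = (List.range m).map (fun t => s(v t, v (t + 1))) := by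
  induction m generalizing v with
  | zero => rfl
  | succ m ih =>
      rw [map_range_succ (fun t => s(v t, v (t + 1)))]
      show _ :: (walkOfFn G (fun t => v (t + 1)) m _).edges = _
      rw [ih]
      rfl

lemma exists_cycle {L : ℕ} (hL3 : 3 ≤ L) (v : ℕ → V)
    (hinj : ∀ a < L, ∀ b < L, v a = v b → a = b)
    (hadj : ∀ t < L, G.Adj (v t) (v (t + 1)))
    (hcyc : v L = v 0) :
    ∃ u, ∃ w : G.Walk u u, w.IsCycle ∧ w.length = L := by
  have hL1 : L - 1 + 1 = L := by omega
  have hclose : G.Adj (v (L - 1)) (v 0) := by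
    have := hadj (L - 1) (by omega)
    rwa [hL1, hcyc] at this
  refine ⟨v (L - 1),
    SimpleGraph.Walk.cons hclose (walkOfFn G v (L - 1) (fun t ht => hadj t (by omega))),
    ?_, ?_⟩
  · rw [SimpleGraph.Walk.cons_isCycle_iff]
    constructor
    · rw [SimpleGraph.Walk.isPath_def, walkOfFn_support]
      refine List.Nodup.map_on ?_ List.nodup_range
      intro a ha b hb hab
      rw [List.mem_range] at ha hb
      exact hinj a (by omega) b (by omega) hab
    · rw [walkOfFn_edges]
      simp only [List.mem_map, List.mem_range, not_exists]
      rintro t ⟨ht, he⟩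
      rw [Sym2.eq_iff] at he
      rcases he with ⟨h1, h2⟩ | ⟨h1, h2⟩
      · exact absurd (hinj t (by omega) (L - 1) (by omega) h1) (by omega)
      · have ht0 : t = 0 := hinj t (by omega) 0 (by omega) h1
        have : t + 1 = L - 1 := hinj (t + 1) (by omega) (L - 1) (by omega) h2
        omega
  · rw [SimpleGraph.Walk.length_cons, walkOfFn_length]
    omega

/-- Support of a walk as getVert list. -/
lemma support_eq_map_getVert {u w : V} (p : G.Walk u w) :
    p.support = (List.range (p.length + 1)).map p.getVert := by
  induction p with
  | nil => rfl
  | cons h q ih =>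
      rw [SimpleGraph.Walk.support_cons, SimpleGraph.Walk.length_cons,
        map_range_succ, ih]
      rfl

/-- getVert of a cycle is injective on `[0, length)`. -/
lemma IsCycle.getVert_injOn' {u : V} {w : G.Walk u u} (hw : w.IsCycle) :
    ∀ a < w.length, ∀ b < w.length, w.getVert a = w.getVert b → a = b := by
  have hnodup : w.support.tail.Nodup := hw.2
  have htail : w.support.tail = (List.range w.length).map (fun t => w.getVert (t + 1)) := by
    rw [support_eq_map_getVert, map_range_succ]
    rfl
  rw [htail] at hnodup
  have hinj1 : ∀ a < w.length, ∀ b < w.length,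
      w.getVert (a + 1) = w.getVert (b + 1) → a = b := by
    intro a ha b hb hab
    exact List.inj_on_of_nodup_map hnodup (List.mem_range.mpr ha) (List.mem_range.mpr hb) hab
  have h0 : w.getVert 0 = w.getVert w.length := by
    rw [SimpleGraph.Walk.getVert_zero, SimpleGraph.Walk.getVert_length]
  have hlen : 3 ≤ w.length := hw.three_le_length
  intro a ha b hb hab
  rcases Nat.eq_zero_or_pos a with rfl | hapos
  · rcases Nat.eq_zero_or_pos b with rfl | hbpos
    · rfl
    · exfalso
      have := hinj1 (b - 1) (by omega) (w.length - 1) (by omega) ?_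
      · omega
      · rw [Nat.sub_add_cancel (by omega), Nat.sub_add_cancel (by omega), ← hab, h0]
  · rcases Nat.eq_zero_or_pos b with rfl | hbpos
    · exfalso
      have := hinj1 (a - 1) (by omega) (w.length - 1) (by omega) ?_
      · omega
      · rw [Nat.sub_add_cancel (by omega), Nat.sub_add_cancel (by omega), hab, h0]
    · have := hinj1 (a - 1) (by omega) (b - 1) (by omega) ?_
      · omega
      · rw [Nat.sub_add_cancel (by omega), Nat.sub_add_cancel (by omega), hab]

end CycleAux

theorem cycle_fwd (n L : ℕ) (hL3 : 3 ≤ L) (hLn : L ≤ n)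
    (G : SimpleGraph (Fin n)) [DecidableRel G.Adj]
    (h : ∃ (v : Fin n) (w : G.Walk v v), w.IsCycle ∧ w.length = L) :
      ∃ x y : Fin n → ℂ,
        (∑ i : Fin n, y i = (L : ℂ)) ∧
        (∀ i : Fin n, y i * (y i - 1) = 0) ∧
        (∀ i : Fin n, ∏ s ∈ Finset.Icc 1 n, (x i - (s : ℂ)) = 0) ∧
        (∀ i : Fin n, y i * ∏ j ∈ G.neighborFinset i,
            ((x i - y j * x j + y j) * (x i - y j * x j - y j * ((L : ℂ) - 1))) = 0) := by
  classical
  obtain ⟨v₀, w, hw, hlen⟩ := h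
  have hinj : ∀ a < L, ∀ b < L, w.getVert a = w.getVert b → a = b := by
    have := CycleAux.IsCycle.getVert_injOn' hw
    rwa [hlen] at this
  set P : Fin n → Prop := fun i => ∃ t, t < L ∧ w.getVert t = i with hP
  set pos : Fin n → ℕ := fun i => if h : P i then h.choose else 0 with hposdef
  have hpos : ∀ i, P i → pos i < L ∧ w.getVert (pos i) = i := by
    intro i hi
    simp only [hposdef, dif_pos hi]
    exact hi.choose_spec
  have hposVert : ∀ t, t < L → pos (w.getVert t) = t := by
    intro t ht
    have hPt : P (w.getVert t) := ⟨t, ht, rfl⟩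
    obtain ⟨h1, h2⟩ := hpos _ hPt
    exact hinj _ h1 _ ht h2
  refine ⟨fun i => ((pos i : ℂ) + 1), fun i => if P i then 1 else 0, ?_, ?_, ?_, ?_⟩
  · rw [Finset.sum_boole]
    have himg : Finset.univ.filter P = (Finset.range L).image w.getVert := by
      ext i
      simp only [Finset.mem_filter, Finset.mem_univ, true_and, Finset.mem_image,
        Finset.mem_range, hP]
    rw [himg, Finset.card_image_of_injOn, Finset.card_range]
    intro a ha b hb hab
    simp only [Finset.coe_range, Set.mem_Iio] at ha hb
    exact hinj a ha b hb hab
  · intro i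
    by_cases hi : P i <;> simp [hi]
  · intro i
    have hmem : pos i + 1 ∈ Finset.Icc 1 n := by
      simp only [Finset.mem_Icc]
      constructor
      · omega
      · by_cases hi : P i
        · have := (hpos i hi).1; omega
        · simp [hposdef, dif_neg hi]; omega
    refine Finset.prod_eq_zero hmem ?_
    push_cast
    ring
  · intro i
    by_cases hi : P i
    swap
    · simp [hi]
    obtain ⟨ht, hvert⟩ := hpos i hi
    set t := pos i with htdef
    by_cases htL : t + 1 < L
    · -- successor within
      set j := w.getVert (t + 1) with hjdef
      have hadj : G.Adj i j := by
        rw [← hvert]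
        exact w.adj_getVert_succ (by omega)
      have hPj : P j := ⟨t + 1, htL, rfl⟩
      have hposj : pos j = t + 1 := hposVert _ htL
      refine mul_eq_zero_of_right _ (Finset.prod_eq_zero (G.mem_neighborFinset i j |>.mpr hadj) ?_)
      simp only [if_pos hPj, hposj]
      push_cast
      ring
    · -- t = L - 1, wrap around
      have htL1 : t = L - 1 := by omega
      set j := w.getVert 0 with hjdef
      have hadj : G.Adj i j := by
        have := w.adj_getVert_succ (i := t) (by omega)
        rw [hvert] at this
        have h2 : w.getVert (t + 1) = w.getVert 0 := by
          rw [SimpleGraph.Walk.getVert_zero]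
          have : t + 1 = w.length := by omega
          rw [this, SimpleGraph.Walk.getVert_length]
        rwa [h2] at this
      have hPj : P j := ⟨0, by omega, rfl⟩
      have hposj : pos j = 0 := hposVert _ (by omega)
      refine mul_eq_zero_of_right _ (Finset.prod_eq_zero (G.mem_neighborFinset i j |>.mpr hadj) ?_)
      simp only [if_pos hPj, hposj]
      have htcast : (t : ℂ) = (L : ℂ) - 1 := by
        rw [htL1]
        push_cast [Nat.cast_sub (by omega : 1 ≤ L)]
        ring
      rw [htcast]
      push_cast
      ring

theorem cycle_bwd (n L : ℕ) (hL3 : 3 ≤ L) (hLn : L ≤ n)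
    (G : SimpleGraph (Fin n)) [DecidableRel G.Adj]
    (h : ∃ x y : Fin n → ℂ,
        (∑ i : Fin n, y i = (L : ℂ)) ∧
        (∀ i : Fin n, y i * (y i - 1) = 0) ∧
        (∀ i : Fin n, ∏ s ∈ Finset.Icc 1 n, (x i - (s : ℂ)) = 0) ∧
        (∀ i : Fin n, y i * ∏ j ∈ G.neighborFinset i,
            ((x i - y j * x j + y j) * (x i - y j * x j - y j * ((L : ℂ) - 1))) = 0)) :
    ∃ (v : Fin n) (w : G.Walk v v), w.IsCycle ∧ w.length = L := by
  classical
  obtain ⟨x, y, h1, h2, h3, h4⟩ := h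
  have hy01 : ∀ i, y i = 0 ∨ y i = 1 := by
    intro i
    rcases mul_eq_zero.1 (h2 i) with h | h
    · exact Or.inl h
    · exact Or.inr (sub_eq_zero.1 h)
  -- the support set
  set S : Finset (Fin n) := Finset.univ.filter (fun i => y i = 1) with hSdef
  have hScard : S.card = L := by
    have hsum : ∑ i : Fin n, y i = (S.card : ℂ) := by
      rw [hSdef, ← Finset.sum_boole]
      refine Finset.sum_congr rfl fun i _ => ?_
      rcases hy01 i with hy | hy <;> simp [hy]
    rw [hsum] at h1
    exact_mod_cast h1
  -- labels
  have hxw : ∀ i, ∃ s : ℕ, 1 ≤ s ∧ s ≤ n ∧ x i = s := by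
    intro i
    have := h3 i
    rw [Finset.prod_eq_zero_iff] at this
    obtain ⟨s, hs, hs0⟩ := this
    rw [Finset.mem_Icc] at hs
    exact ⟨s, hs.1, hs.2, sub_eq_zero.1 hs0⟩
  choose ξ hξ1 hξn hξx using hxw
  have hxne : ∀ i, x i ≠ 0 := by
    intro i
    rw [hξx i]
    exact_mod_cast Nat.cast_ne_zero.mpr (by have := hξ1 i; omega)
  -- successor function
  have key : ∀ i, ∃ j, i ∈ S → G.Adj i j ∧ j ∈ S ∧
      (ξ j = ξ i + 1 ∨ ξ i = ξ j + (L - 1)) := by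
    intro i
    by_cases hi : i ∈ S
    swap
    · exact ⟨i, fun h => absurd h hi⟩
    have hyi : y i = 1 := (Finset.mem_filter.1 hi).2
    have hprod := h4 i
    rw [hyi, one_mul, Finset.prod_eq_zero_iff] at hprod
    obtain ⟨j, hjmem, hj0⟩ := hprod
    have hadj : G.Adj i j := (G.mem_neighborFinset i j).1 hjmem
    rcases hy01 j with hyj | hyj
    · exfalso
      rw [hyj] at hj0
      simp only [zero_mul, sub_zero, add_zero, mul_zero] at hj0
      rcases mul_eq_zero.1 hj0 with h | h
      · exact hxne i h
      · exact hxne i h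
    · refine ⟨j, fun _ => ⟨hadj, Finset.mem_filter.2 ⟨Finset.mem_univ _, hyj⟩, ?_⟩⟩
      rw [hyj, one_mul, one_mul] at hj0
      rcases mul_eq_zero.1 hj0 with heq | heq
      · left
        have : ((ξ i + 1 : ℕ) : ℂ) = ((ξ j : ℕ) : ℂ) := by
          rw [hξx i, hξx j] at heq
          push_cast
          linear_combination heq
        exact (Nat.cast_inj.mp this).symm
      · right
        have hcast : ((ξ j + (L - 1) : ℕ) : ℂ) = ((ξ i : ℕ) : ℂ) := by
          rw [hξx i, hξx j] at heq
          push_cast [Nat.cast_sub (show 1 ≤ L by omega)]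
          linear_combination -heq
        exact (Nat.cast_inj.mp hcast).symm
  choose f hf using key
  have hfS : ∀ i ∈ S, f i ∈ S := fun i hi => (hf i hi).2.1
  have hfadj : ∀ i ∈ S, G.Adj i (f i) := fun i hi => (hf i hi).1
  have hfξ : ∀ i ∈ S, ξ (f i) = ξ i + 1 ∨ ξ i = ξ (f i) + (L - 1) :=
    fun i hi => (hf i hi).2.2
  -- iterate
  have hSne : S.Nonempty := Finset.card_pos.1 (by omega)
  obtain ⟨u₀, hu₀⟩ := hSne
  have hiterS : ∀ m, f^[m] u₀ ∈ S := by
    intro m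
    induction m with
    | zero => simpa using hu₀
    | succ m ih => rw [Function.iterate_succ_apply']; exact hfS _ ih
  -- find a repeat
  obtain ⟨a, b, hne, hab⟩ : ∃ a b : ℕ, a ≠ b ∧ f^[a] u₀ = f^[b] u₀ := by
    obtain ⟨a, b, hne, hab⟩ := Finite.exists_ne_map_eq_of_infinite (fun m : ℕ => f^[m] u₀)
    exact ⟨a, b, hne, hab⟩
  wlog hlt : a < b generalizing a b
  · exact this b a hne.symm hab.symm (by omega)
  set u := f^[a] u₀ with hudef
  have huS : u ∈ S := hiterS a
  have hper : ∃ m, 0 < m ∧ f^[m] u = u := by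
    refine ⟨b - a, by omega, ?_⟩
    rw [hudef, ← Function.iterate_add_apply]
    rw [show b - a + a = b by omega]
    exact hab.symm
  set k := Nat.find hper with hkdef
  obtain ⟨hkpos, hkfix⟩ : 0 < k ∧ f^[k] u = u := Nat.find_spec hper
  have hkmin : ∀ m, 0 < m → m < k → f^[m] u ≠ u := by
    intro m hm hmk hfix
    exact Nat.find_min hper hmk ⟨hm, hfix⟩
  -- orbit elements
  set v : ℕ → Fin n := fun t => f^[t] u with hvdef
  have hvS : ∀ t, v t ∈ S := by
    intro t
    show f^[t] (f^[a] u₀) ∈ S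
    rw [← Function.iterate_add_apply]
    exact hiterS _
  have hvsucc : ∀ t, v (t + 1) = f (v t) := by
    intro t
    rw [hvdef]
    exact Function.iterate_succ_apply' f t u
  have hvk : v k = u := hkfix
  have hv0 : v 0 = u := rfl
  -- distinctness on [0, k)
  have hvinj : ∀ c < k, ∀ d < k, v c = v d → c = d := by
    have main : ∀ c d, c < d → d < k → v c ≠ v d := by
      intro c d hcd hdk heq
      have h1 : f^[k - c] (v c) = u := by
        rw [hvdef, ← Function.iterate_add_apply, show k - c + c = k by omega]
        exact hkfix
      have h2 : f^[k - c] (v d) = v (d - c + k) := by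
        rw [hvdef, ← Function.iterate_add_apply]
        congr 1
        omega
      have h3 : v (d - c + k) = v (d - c) := by
        show f^[d - c + k] u = f^[d - c] u
        rw [Function.iterate_add_apply, hkfix]
      have : v (d - c) = u := by rw [← h3, ← h2, ← heq, h1]
      exact hkmin (d - c) (by omega) (by omega) this
    intro c hc d hd heq
    rcases lt_trichotomy c d with h | h | h
    · exact absurd heq (main c d h hd)
    · exact h
    · exact absurd heq.symm (main d c h hc)
  -- k ≤ L
  have hkL : k ≤ L := by
    have himg : ((Finset.range k).image v).card = k := by
      rw [Finset.card_image_of_injOn, Finset.card_range]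
      intro c hc d hd
      simp only [Finset.coe_range, Set.mem_Iio] at hc hd
      exact hvinj c hc d hd
    have hsub : (Finset.range k).image v ⊆ S := by
      intro i hi
      obtain ⟨t, _, rfl⟩ := Finset.mem_image.1 hi
      exact hvS t
    have := Finset.card_le_card hsub
    omega
  -- increments
  set g : ℕ → ℤ := fun t => (ξ (v t) : ℤ) with hgdef
  have hstep : ∀ t, g (t + 1) - g t = 1 ∨ g (t + 1) - g t = 1 - L := by
    intro t
    rcases hfξ (v t) (hvS t) with hc | hc
    · left
      rw [hgdef]
      simp only [hvsucc t, hc]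
      push_cast
      ring
    · right
      rw [hgdef]
      simp only [hvsucc t]
      have : (ξ (v t) : ℤ) = ξ (f (v t)) + (L - 1) := by
        rw [hc]
        push_cast [Nat.cast_sub (show 1 ≤ L by omega)]
        ring
      omega
  have hsum : ∑ t ∈ Finset.range k, (g (t + 1) - g t) = 0 := by
    rw [Finset.sum_range_sub]
    have : v k = v 0 := by rw [hvk, hv0]
    rw [hgdef]
    simp [this]
  -- count drops
  set D := (Finset.range k).filter (fun t => ¬ (g (t + 1) - g t = 1)) with hDdef
  set F := (Finset.range k).filter (fun t => g (t + 1) - g t = 1) with hFdef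
  have hDdrop : ∀ t ∈ D, g (t + 1) - g t = 1 - L := by
    intro t ht
    rw [hDdef, Finset.mem_filter] at ht
    rcases hstep t with h | h
    · exact absurd h ht.2
    · exact h
  have htot := Finset.sum_filter_add_sum_filter_not (Finset.range k)
    (fun t => g (t + 1) - g t = 1) (fun t => g (t + 1) - g t)
  rw [hsum] at htot
  have e1 : ∑ t ∈ F, (g (t + 1) - g t) = (F.card : ℤ) := by
    rw [Finset.sum_congr rfl (fun t ht => (Finset.mem_filter.1 ht).2)]
    simp; rfl
  have e2 : ∑ t ∈ D, (g (t + 1) - g t) = (D.card : ℤ) * (1 - L) := by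
    rw [Finset.sum_congr rfl hDdrop]
    simp [mul_comm]; ring
  rw [← hFdef, ← hDdef, e1, e2] at htot
  have e3 : F.card + D.card = k := by
    rw [hFdef, hDdef, Finset.card_filter_add_card_filter_not, Finset.card_range]
  have e3' : (F.card : ℤ) + (D.card : ℤ) = k := by exact_mod_cast e3
  have hkDL : (k : ℤ) = D.card * L := by linear_combination htot - e3'
  have hDpos : 1 ≤ D.card := by
    by_contra hD
    have hD0 : D.card = 0 := by omega
    rw [hD0] at hkDL
    simp at hkDL
    omega
  have hkeq : k = L := by
    have hge : (k : ℤ) ≥ L := by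
      rw [hkDL]
      have h1' : (1 : ℤ) ≤ D.card := by exact_mod_cast hDpos
      nlinarith [show (0:ℤ) ≤ L by omega]
    omega
  -- build the cycle
  refine CycleAux.exists_cycle hL3 v ?_ ?_ ?_
  · rw [← hkeq]; exact hvinj
  · intro t _
    rw [hvsucc t]
    exact hfadj _ (hvS t)
  · rw [← hkeq, hvk, hv0]


/-- A finite simple graph `G` on `Fin n` has a cycle of length `L`
(with `3 ≤ L ≤ n`) if and only if the polynomial system
`∑ y_i = L`; `y_i (y_i - 1) = 0` and `∏_{s=1}^n (x_i - s) = 0` for every vertex `i`; and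
`y_i ∏_{j ∈ Adj(i)} (x_i - y_j x_j + y_j)(x_i - y_j x_j - y_j (L-1)) = 0` for every vertex `i`,
has a solution `x, y ∈ ℂ^n`. -/
theorem cycle_iff_polynomial_system (n L : ℕ) (hL3 : 3 ≤ L) (hLn : L ≤ n)
    (G : SimpleGraph (Fin n)) [DecidableRel G.Adj] :
    (∃ (v : Fin n) (w : G.Walk v v), w.IsCycle ∧ w.length = L) ↔
      ∃ x y : Fin n → ℂ,
        (∑ i : Fin n, y i = (L : ℂ)) ∧
        (∀ i : Fin n, y i * (y i - 1) = 0) ∧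
        (∀ i : Fin n, ∏ s ∈ Finset.Icc 1 n, (x i - (s : ℂ)) = 0) ∧
        (∀ i : Fin n, y i * ∏ j ∈ G.neighborFinset i,
            ((x i - y j * x j + y j) * (x i - y j * x j - y j * ((L : ℂ) - 1))) = 0) := by
  constructor
  · exact cycle_fwd n L hL3 hLn G
  · exact cycle_bwd n L hL3 hLn G
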